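/- For all integers 1 ≤ k ≤ n, the sum over decreasing sequences of positive integers n_1 ≥ ... ≥ n_k with ∑ n_i = n of the number of set partitions of an n-set into k blocks of sizes (n_1,...,n_k), weighted by ∏_{i=1}^k [1/2]_{n_i - 1}, equals C(2n-k-1, n-1) · (Γ(n)/Γ(k)) · 2^{2k-2n}, where [1/2]_m = ∏_{j=1}^m (j - 1/2). -/

import Mathlib

open Finset

/-- `[1/2]_m = ∏_{j=1}^m (j - 1/2)`. -/
noncomputable def halfRising (m : ℕ) : ℝ := ∏ j ∈ Finset.Icc 1 m, ((j : ℝ) - 1 / 2)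


variable {α : Type*} [DecidableEq α] [Fintype α]
set_option linter.unusedSectionVars false

def IsPartOf (s : Finset α) (F : Finset (Finset α)) : Prop :=
  (∀ A ∈ F, A.Nonempty) ∧ (∀ A ∈ F, ∀ B ∈ F, A ≠ B → Disjoint A B) ∧ F.sup id = s

instance (s : Finset α) : DecidablePred (IsPartOf s) := fun _ => by
  unfold IsPartOf; infer_instance

lemma sum_finpartition (s : Finset α) (f : Finset α → ℝ) (k : ℕ) :
    ∑ P ∈ Finset.univ.filter (fun P : Finpartition s => P.parts.card = k),
      ∏ A ∈ P.parts, f A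
    = ∑ F ∈ Finset.univ.filter (fun F => IsPartOf s F ∧ F.card = k), ∏ A ∈ F, f A := by
  refine Finset.sum_bij' (fun P _ => P.parts)
    (fun F hF => Finpartition.mk F ?_ ?_ ?_) ?_ ?_ ?_ ?_ ?_
  · rw [Finset.supIndep_iff_pairwiseDisjoint]
    simp only [mem_filter, mem_univ, true_and] at hF
    intro A hA B hB hne
    exact hF.1.2.1 A hA B hB hne
  · simp only [mem_filter, mem_univ, true_and] at hF
    exact hF.1.2.2
  · simp only [mem_filter, mem_univ, true_and] at hF
    intro h
    exact (hF.1.1 _ h).ne_empty rfl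
  · intro P hP
    simp only [mem_filter, mem_univ, true_and] at hP ⊢
    refine ⟨⟨fun A hA => P.nonempty_of_mem_parts hA, fun A hA B hB hne => P.disjoint hA hB hne, P.sup_parts⟩, hP⟩
  · intro F hF
    simp only [mem_filter, mem_univ, true_and] at hF ⊢
    exact hF.2
  · intro P hP
    rfl
  · intro F hF
    rfl
  · intro P hP
    rfl

def partCont (a : α) (F : Finset (Finset α)) : Finset α :=
  F.sup (fun A => if a ∈ A then A else ∅)

lemma partCont_eq {a : α} {F : Finset (Finset α)}
    (hdisj : ∀ A ∈ F, ∀ B ∈ F, A ≠ B → Disjoint A B)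
    {B : Finset α} (hB : B ∈ F) (haB : a ∈ B) : partCont a F = B := by
  apply le_antisymm
  · apply Finset.sup_le
    intro A hA
    by_cases h : a ∈ A
    · rw [if_pos h]
      rcases eq_or_ne A B with rfl | hne
      · exact le_rfl
      · exact absurd (Finset.disjoint_left.1 (hdisj A hA B hB hne) h) (fun h' => h' haB)
    · rw [if_neg h]; exact bot_le
  · have : B = (fun A => if a ∈ A then A else ∅) B := by simp [haB]
    rw [this]
    exact Finset.le_sup (f := fun A => if a ∈ A then A else ∅) hB

lemma sum_card_eq {s : Finset α} {F : Finset (Finset α)} (hF : IsPartOf s F) :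
    ∑ A ∈ F, A.card = s.card := by
  obtain ⟨-, hdisj, hsup⟩ := hF
  rw [← hsup, Finset.sup_eq_biUnion,
    Finset.card_biUnion (t := (id : Finset α → Finset α)) (fun A hA B hB hne => hdisj A hA B hB hne)]
  rfl

lemma isPartOf_card_le {s : Finset α} {F : Finset (Finset α)} (hF : IsPartOf s F) :
    F.card ≤ s.card := by
  rw [← sum_card_eq hF]
  calc F.card = ∑ _A ∈ F, 1 := by simp
  _ ≤ ∑ A ∈ F, A.card := Finset.sum_le_sum fun A hA => (hF.1 A hA).card_pos

lemma exists_mem_part {s : Finset α} {F : Finset (Finset α)} (hF : IsPartOf s F)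
    {a : α} (ha : a ∈ s) : ∃ B ∈ F, a ∈ B := by
  have := hF.2.2
  rw [← this] at ha
  simpa using (Finset.mem_sup).1 ha

lemma mem_of_mem_part {s : Finset α} {F : Finset (Finset α)} (hF : IsPartOf s F)
    {A : Finset α} (hA : A ∈ F) : A ⊆ s := by
  rw [← hF.2.2]; exact Finset.le_sup (f := id) hA

section Insertion
variable {a : α} {s : Finset α}

lemma up_isPart (ha : a ∉ s) {G : Finset (Finset α)} {A : Finset α}
    (hG : IsPartOf s G) (hA : A ∈ G) :
    insert a A ∉ G.erase A ∧ {a} ∉ insert (insert a A) (G.erase A) ∧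
      IsPartOf (insert a s) (insert (insert a A) (G.erase A)) := by
  obtain ⟨hne, hdisj, hsup⟩ := hG
  have hsub : ∀ C ∈ G, a ∉ C := fun C hC h => ha (mem_of_mem_part ⟨hne, hdisj, hsup⟩ hC h)
  have h1 : insert a A ∉ G.erase A := by
    intro h
    exact hsub _ (Finset.mem_of_mem_erase h) (Finset.mem_insert_self a A)
  refine ⟨h1, ?_, ?_, ?_, ?_⟩
  · intro h
    rcases Finset.mem_insert.1 h with h | h
    · have : A ⊆ {a} := by rw [h]; exact Finset.subset_insert a A
      obtain ⟨x, hx⟩ := hne A hA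
      have := this hx
      rw [Finset.mem_singleton] at this
      exact hsub A hA (this ▸ hx)
    · exact hsub _ (Finset.mem_of_mem_erase h) (Finset.mem_singleton_self a)
  · intro C hC
    rcases Finset.mem_insert.1 hC with rfl | h
    · exact Finset.insert_nonempty a A
    · exact hne _ (Finset.mem_of_mem_erase h)
  · intro C hC D hD hne'
    rcases Finset.mem_insert.1 hC with rfl | hC' <;> rcases Finset.mem_insert.1 hD with rfl | hD'
    · exact absurd rfl hne'
    · rw [Finset.disjoint_insert_left]
      exact ⟨hsub _ (Finset.mem_of_mem_erase hD'),
        hdisj A hA _ (Finset.mem_of_mem_erase hD') (Finset.ne_of_mem_erase hD').symm⟩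
    · rw [Finset.disjoint_insert_right]
      exact ⟨hsub _ (Finset.mem_of_mem_erase hC'),
        hdisj _ (Finset.mem_of_mem_erase hC') A hA (Finset.ne_of_mem_erase hC')⟩
    · exact hdisj _ (Finset.mem_of_mem_erase hC') _ (Finset.mem_of_mem_erase hD') hne'
  · rw [Finset.sup_insert]
    have h2 : G.sup id = A ⊔ (G.erase A).sup id := by
      conv_lhs => rw [← Finset.insert_erase hA]
      rw [Finset.sup_insert]
      rfl
    show insert a A ⊔ (G.erase A).sup id = insert a s
    rw [sup_eq_union, Finset.insert_union, ← sup_eq_union, ← h2, hsup]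

end Insertion

lemma down_isPart {a : α} {s : Finset α} (ha : a ∉ s) {F : Finset (Finset α)}
    (hF : IsPartOf (insert a s) F) (hna : {a} ∉ F)
    {B : Finset α} (hB : B ∈ F) (haB : a ∈ B) :
    (B.erase a).Nonempty ∧ B.erase a ∉ F.erase B ∧
      IsPartOf s (insert (B.erase a) (F.erase B)) := by
  obtain ⟨hne, hdisj, hsup⟩ := hF
  have hnotin : ∀ C ∈ F.erase B, a ∉ C := by
    intro C hC h
    exact (Finset.disjoint_left.1
      (hdisj C (Finset.mem_of_mem_erase hC) B hB (Finset.ne_of_mem_erase hC))) h haB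
  have hBne : B ≠ {a} := fun h => hna (h ▸ hB)
  have hBe : (B.erase a).Nonempty := by
    rw [Finset.nonempty_iff_ne_empty]
    intro h
    rcases (Finset.erase_eq_empty_iff B a).1 h with h' | h'
    · exact (hne B hB).ne_empty h'
    · exact hBne h'
  have hBnotin : B.erase a ∉ F.erase B := by
    intro h
    obtain ⟨x, hx⟩ := hBe
    exact (Finset.disjoint_left.1
      (hdisj _ (Finset.mem_of_mem_erase h) B hB (Finset.ne_of_mem_erase h))) hx
      (Finset.mem_of_mem_erase hx)
  refine ⟨hBe, hBnotin, ?_, ?_, ?_⟩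
  · intro C hC
    rcases Finset.mem_insert.1 hC with rfl | h
    · exact hBe
    · exact hne _ (Finset.mem_of_mem_erase h)
  · intro C hC D hD hne'
    rcases Finset.mem_insert.1 hC with rfl | hC' <;> rcases Finset.mem_insert.1 hD with rfl | hD'
    · exact absurd rfl hne'
    · exact Finset.disjoint_of_subset_left (Finset.erase_subset a B)
        (hdisj B hB _ (Finset.mem_of_mem_erase hD') (Finset.ne_of_mem_erase hD').symm)
    · exact Finset.disjoint_of_subset_right (Finset.erase_subset a B)
        (hdisj _ (Finset.mem_of_mem_erase hC') B hB (Finset.ne_of_mem_erase hC'))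
    · exact hdisj _ (Finset.mem_of_mem_erase hC') _ (Finset.mem_of_mem_erase hD') hne'
  · apply Finset.Subset.antisymm
    · intro x hx
      rw [Finset.mem_sup] at hx
      obtain ⟨C, hC, hxC⟩ := hx
      rcases Finset.mem_insert.1 hC with rfl | hC'
      · have hxB : x ∈ B := Finset.mem_of_mem_erase hxC
        have : x ∈ insert a s := by
          rw [← hsup, Finset.mem_sup]; exact ⟨B, hB, hxB⟩
        rcases Finset.mem_insert.1 this with rfl | h
        · exact absurd rfl (Finset.ne_of_mem_erase hxC)
        · exact h
      · have : x ∈ insert a s := by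
          rw [← hsup, Finset.mem_sup]
          exact ⟨C, Finset.mem_of_mem_erase hC', hxC⟩
        rcases Finset.mem_insert.1 this with rfl | h
        · exact absurd hxC (hnotin C hC')
        · exact h
    · intro x hx
      have : x ∈ insert a s := Finset.mem_insert_of_mem hx
      rw [← hsup, Finset.mem_sup] at this
      obtain ⟨C, hC, hxC⟩ := this
      rw [Finset.mem_sup]
      rcases eq_or_ne C B with rfl | hne'
      · exact ⟨C.erase a, Finset.mem_insert_self _ _,
          Finset.mem_erase.2 ⟨fun h => ha (h ▸ hx), hxC⟩⟩
      · exact ⟨C, Finset.mem_insert_of_mem (Finset.mem_erase.2 ⟨hne', hC⟩), hxC⟩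

lemma down_singleton {a : α} {s : Finset α} (ha : a ∉ s) {F : Finset (Finset α)}
    (hF : IsPartOf (insert a s) F) (hsa : {a} ∈ F) :
    IsPartOf s (F.erase {a}) := by
  obtain ⟨hne, hdisj, hsup⟩ := hF
  have hnotin : ∀ C ∈ F.erase {a}, a ∉ C := by
    intro C hC h
    exact (Finset.disjoint_left.1
      (hdisj C (Finset.mem_of_mem_erase hC) {a} hsa (Finset.ne_of_mem_erase hC))) h (Finset.mem_singleton_self a)
  refine ⟨fun C hC => hne _ (Finset.mem_of_mem_erase hC),
    fun C hC D hD h => hdisj _ (Finset.mem_of_mem_erase hC) _ (Finset.mem_of_mem_erase hD) h, ?_⟩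
  apply Finset.Subset.antisymm
  · intro x hx
    rw [Finset.mem_sup] at hx
    obtain ⟨C, hC, hxC⟩ := hx
    have : x ∈ insert a s := by
      rw [← hsup, Finset.mem_sup]
      exact ⟨C, Finset.mem_of_mem_erase hC, hxC⟩
    rcases Finset.mem_insert.1 this with rfl | h
    · exact absurd hxC (hnotin C hC)
    · exact h
  · intro x hx
    have : x ∈ insert a s := Finset.mem_insert_of_mem hx
    rw [← hsup, Finset.mem_sup] at this
    obtain ⟨C, hC, hxC⟩ := this
    have hCne : C ≠ {a} := by
      rintro rfl
      have : x = a := Finset.mem_singleton.1 hxC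
      exact ha (this ▸ hx)
    rw [Finset.mem_sup]
    exact ⟨C, Finset.mem_erase.2 ⟨hCne, hC⟩, hxC⟩

lemma up_singleton {a : α} {s : Finset α} (ha : a ∉ s) {G : Finset (Finset α)}
    (hG : IsPartOf s G) : {a} ∉ G ∧ IsPartOf (insert a s) (insert {a} G) := by
  have hnotin : ∀ C ∈ G, a ∉ C := fun C hC h => ha (mem_of_mem_part hG hC h)
  have h1 : {a} ∉ G := fun h => hnotin _ h (Finset.mem_singleton_self a)
  refine ⟨h1, ?_, ?_, ?_⟩
  · intro C hC
    rcases Finset.mem_insert.1 hC with rfl | h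
    · exact Finset.singleton_nonempty a
    · exact hG.1 _ h
  · intro C hC D hD hne'
    rcases Finset.mem_insert.1 hC with rfl | hC' <;> rcases Finset.mem_insert.1 hD with rfl | hD'
    · exact absurd rfl hne'
    · exact Finset.disjoint_singleton_left.2 (hnotin _ hD')
    · exact Finset.disjoint_singleton_right.2 (hnotin _ hC')
    · exact hG.2.1 _ hC' _ hD' hne'
  · rw [Finset.sup_insert, hG.2.2]
    show {a} ⊔ s = insert a s
    ext x; simp [Finset.mem_union]

lemma part1 {a : α} {s : Finset α} (ha : a ∉ s) (f : Finset α → ℝ) (k : ℕ) :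
    ∑ F ∈ Finset.univ.filter
        (fun F => (IsPartOf (insert a s) F ∧ F.card = k + 1) ∧ {a} ∈ F),
      ∏ A ∈ F, f A
    = f {a} * ∑ F ∈ Finset.univ.filter (fun F => IsPartOf s F ∧ F.card = k),
        ∏ A ∈ F, f A := by
  rw [Finset.mul_sum]
  refine Finset.sum_bij' (fun F _ => F.erase {a}) (fun G _ => insert {a} G)
    ?_ ?_ ?_ ?_ ?_
  · intro F hF
    simp only [mem_filter, mem_univ, true_and] at hF ⊢
    obtain ⟨⟨hP, hcard⟩, hsa⟩ := hF
    exact ⟨down_singleton ha hP hsa, by rw [Finset.card_erase_of_mem hsa, hcard]; rfl⟩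
  · intro G hG
    simp only [mem_filter, mem_univ, true_and] at hG ⊢
    obtain ⟨h1, h2⟩ := up_singleton ha hG.1
    exact ⟨⟨h2, by rw [Finset.card_insert_of_notMem h1, hG.2]⟩, Finset.mem_insert_self _ _⟩
  · intro F hF
    simp only [mem_filter, mem_univ, true_and] at hF
    exact Finset.insert_erase hF.2
  · intro G hG
    simp only [mem_filter, mem_univ, true_and] at hG
    exact Finset.erase_insert (up_singleton ha hG.1).1
  · intro F hF
    simp only [mem_filter, mem_univ, true_and] at hF
    exact (Finset.mul_prod_erase F f hF.2).symm

lemma part2 {a : α} {s : Finset α} (ha : a ∉ s) (f : Finset α → ℝ) (k : ℕ) :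
    ∑ F ∈ Finset.univ.filter
        (fun F => (IsPartOf (insert a s) F ∧ F.card = k + 1) ∧ {a} ∉ F),
      ∏ A ∈ F, f A
    = ∑ F ∈ Finset.univ.filter (fun F => IsPartOf s F ∧ F.card = k + 1),
        ∑ A ∈ F, f (insert a A) * ∏ B ∈ F.erase A, f B := by
  rw [← Finset.sum_sigma (Finset.univ.filter (fun F => IsPartOf s F ∧ F.card = k + 1))
    (fun F => F) (fun p => f (insert a p.2) * ∏ B ∈ p.1.erase p.2, f B)]
  have hBfact : ∀ F, (IsPartOf (insert a s) F ∧ F.card = k + 1) ∧ {a} ∉ F →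
      partCont a F ∈ F ∧ a ∈ partCont a F := by
    intro F hF
    obtain ⟨B0, hB0, haB0⟩ := exists_mem_part hF.1.1 (Finset.mem_insert_self a s)
    have : partCont a F = B0 := partCont_eq hF.1.1.2.1 hB0 haB0
    rw [this]
    exact ⟨hB0, haB0⟩
  refine Finset.sum_bij'
    (fun F _ => ⟨insert ((partCont a F).erase a) (F.erase (partCont a F)),
      (partCont a F).erase a⟩)
    (fun p _ => insert (insert a p.2) (p.1.erase p.2)) ?_ ?_ ?_ ?_ ?_
  · intro F hF
    simp only [mem_filter, mem_univ, true_and] at hF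
    obtain ⟨hBF, haB⟩ := hBfact F hF
    obtain ⟨hBe, hBnotin, hGpart⟩ := down_isPart ha hF.1.1 hF.2 hBF haB
    rw [Finset.mem_sigma]
    refine ⟨?_, Finset.mem_insert_self _ _⟩
    simp only [mem_filter, mem_univ, true_and]
    refine ⟨hGpart, ?_⟩
    rw [Finset.card_insert_of_notMem hBnotin, Finset.card_erase_of_mem hBF, hF.1.2]
    rfl
  · rintro ⟨G, A⟩ hp
    rw [Finset.mem_sigma] at hp
    simp only [mem_filter, mem_univ, true_and] at hp ⊢
    obtain ⟨⟨hG, hGcard⟩, hA⟩ := hp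
    obtain ⟨h1, h2, h3⟩ := up_isPart ha hG hA
    refine ⟨⟨h3, ?_⟩, h2⟩
    rw [Finset.card_insert_of_notMem h1, Finset.card_erase_of_mem hA, hGcard]
    rfl
  · intro F hF
    simp only [mem_filter, mem_univ, true_and] at hF
    obtain ⟨hBF, haB⟩ := hBfact F hF
    obtain ⟨hBe, hBnotin, hGpart⟩ := down_isPart ha hF.1.1 hF.2 hBF haB
    show insert (insert a ((partCont a F).erase a))
      ((insert ((partCont a F).erase a) (F.erase (partCont a F))).erase
        ((partCont a F).erase a)) = F
    rw [Finset.insert_erase haB, Finset.erase_insert hBnotin, Finset.insert_erase hBF]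
  · rintro ⟨G, A⟩ hp
    rw [Finset.mem_sigma] at hp
    simp only [mem_filter, mem_univ, true_and] at hp
    obtain ⟨⟨hG, hGcard⟩, hA⟩ := hp
    obtain ⟨h1, h2, h3⟩ := up_isPart ha hG hA
    have haA : a ∉ A := fun h => ha (mem_of_mem_part hG hA h)
    have hpc : partCont a (insert (insert a A) (G.erase A)) = insert a A :=
      partCont_eq h3.2.1 (Finset.mem_insert_self _ _) (Finset.mem_insert_self a A)
    have e2 : (partCont a (insert (insert a A) (G.erase A))).erase a = A := by
      rw [hpc, Finset.erase_insert haA]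
    have e1 : insert ((partCont a (insert (insert a A) (G.erase A))).erase a)
        ((insert (insert a A) (G.erase A)).erase
          (partCont a (insert (insert a A) (G.erase A)))) = G := by
      rw [e2, hpc, Finset.erase_insert h1, Finset.insert_erase hA]
    exact Sigma.ext e1 (heq_of_eq e2)
  · intro F hF
    simp only [mem_filter, mem_univ, true_and] at hF
    obtain ⟨hBF, haB⟩ := hBfact F hF
    obtain ⟨hBe, hBnotin, hGpart⟩ := down_isPart ha hF.1.1 hF.2 hBF haB
    show ∏ A ∈ F, f A = f (insert a ((partCont a F).erase a)) *
      ∏ B ∈ (insert ((partCont a F).erase a) (F.erase (partCont a F))).erase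
        ((partCont a F).erase a), f B
    rw [Finset.insert_erase haB, Finset.erase_insert hBnotin,
      Finset.mul_prod_erase F f hBF]

lemma halfRising_zero : halfRising 0 = 1 := by simp [halfRising]

lemma halfRising_succ (c : ℕ) :
    halfRising (c + 1) = halfRising c * (((c : ℝ) + 1) - 1 / 2) := by
  rw [halfRising, halfRising, Finset.prod_Icc_succ_top (Nat.le_add_left 1 c)]
  push_cast
  ring

noncomputable def S (s : Finset α) (k : ℕ) : ℝ :=
  ∑ F ∈ Finset.univ.filter (fun F => IsPartOf s F ∧ F.card = k),
    ∏ A ∈ F, halfRising (A.card - 1)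

lemma S_rec {a : α} {s : Finset α} (ha : a ∉ s) (k : ℕ) :
    S (insert a s) (k + 1) = S s k + ((s.card : ℝ) - (k + 1) / 2) * S s (k + 1) := by
  unfold S
  rw [← Finset.sum_filter_add_sum_filter_not
    (Finset.univ.filter (fun F => IsPartOf (insert a s) F ∧ F.card = k + 1))
    (fun F => {a} ∈ F), Finset.filter_filter, Finset.filter_filter,
    part1 ha _ k, part2 ha _ k]
  rw [show halfRising ((Finset.card {a}) - 1) = 1 by
    rw [Finset.card_singleton]; exact halfRising_zero, one_mul]
  congr 1
  rw [Finset.mul_sum]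
  apply Finset.sum_congr rfl
  intro F hF
  simp only [mem_filter, mem_univ, true_and] at hF
  obtain ⟨hP, hcard⟩ := hF
  have key : ∀ A ∈ F, halfRising ((insert a A).card - 1) *
      ∏ B ∈ F.erase A, halfRising (B.card - 1)
      = ((A.card : ℝ) - 1 / 2) * ∏ B ∈ F, halfRising (B.card - 1) := by
    intro A hA
    have haA : a ∉ A := fun h => ha (mem_of_mem_part hP hA h)
    have hApos : 1 ≤ A.card := (hP.1 A hA).card_pos
    have h1 : (insert a A).card - 1 = A.card := by
      rw [Finset.card_insert_of_notMem haA]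
      rfl
    have h2 : A.card = (A.card - 1) + 1 := (Nat.succ_pred_eq_of_pos hApos).symm
    rw [h1, h2, halfRising_succ]
    have h3 : ((A.card - 1 : ℕ) : ℝ) + 1 = (A.card : ℝ) := by
      rw [Nat.cast_sub hApos]; push_cast; ring
    rw [h3, ← h2]
    rw [mul_comm (halfRising (A.card - 1)) _, mul_assoc]
    congr 1
    exact Finset.mul_prod_erase F (fun B => halfRising (B.card - 1)) hA
  rw [Finset.sum_congr rfl key, ← Finset.sum_mul]
  congr 1
  rw [Finset.sum_sub_distrib]
  have : ∑ A ∈ F, ((A.card : ℕ) : ℝ) = (s.card : ℝ) := by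
    rw [← Nat.cast_sum, sum_card_eq hP]
  rw [this, Finset.sum_const, hcard]
  ring

lemma S_card_lt {s : Finset α} {k : ℕ} (h : s.card < k) : S s k = 0 := by
  apply Finset.sum_eq_zero
  intro F hF
  simp only [mem_filter, mem_univ, true_and] at hF
  exact absurd (hF.2 ▸ isPartOf_card_le hF.1) (Nat.not_le.2 h)

lemma S_zero_of_nonempty {s : Finset α} (hs : s.Nonempty) : S s 0 = 0 := by
  apply Finset.sum_eq_zero
  intro F hF
  simp only [mem_filter, mem_univ, true_and, Finset.card_eq_zero] at hF
  obtain ⟨hP, rfl⟩ := hF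
  have := hP.2.2
  simp only [Finset.sup_empty] at this
  exact absurd this.symm (Finset.nonempty_iff_ne_empty.1 hs)

lemma S_empty_zero : S (∅ : Finset α) 0 = 1 := by
  unfold S
  rw [show Finset.univ.filter
      (fun F : Finset (Finset α) => IsPartOf ∅ F ∧ F.card = 0) = {∅} from ?_]
  · simp
  · ext F
    simp only [mem_filter, mem_univ, true_and, Finset.mem_singleton, Finset.card_eq_zero]
    constructor
    · exact fun h => h.2
    · rintro rfl
      exact ⟨⟨fun A hA => absurd hA (Finset.notMem_empty A),
        fun A hA => absurd hA (Finset.notMem_empty A), Finset.sup_empty⟩, rfl⟩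

noncomputable def gfun (n k : ℕ) : ℝ :=
  (Nat.choose (2 * n - k - 1) (n - 1) : ℝ) * (Nat.factorial (n - 1)) /
    (Nat.factorial (k - 1)) * (2 : ℝ) ^ (2 * (k : ℤ) - 2 * n)

lemma two_zpow (k n : ℕ) : (2 : ℝ) ^ (2 * (k : ℤ) - 2 * (n : ℤ)) =
    2 ^ (2 * k) / 2 ^ (2 * n) := by
  rw [zpow_sub₀ (by norm_num : (2:ℝ) ≠ 0),
    show (2 * (k : ℤ)) = ((2 * k : ℕ) : ℤ) by push_cast; ring,
    show (2 * (n : ℤ)) = ((2 * n : ℕ) : ℤ) by push_cast; ring,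
    zpow_natCast, zpow_natCast]

lemma gfun_self (n : ℕ) (hn : 1 ≤ n) : gfun n n = 1 := by
  obtain ⟨j, rfl⟩ := Nat.exists_eq_add_of_le hn
  unfold gfun
  rw [two_zpow, show 2 * (1 + j) - (1 + j) - 1 = j by omega,
    show 1 + j - 1 = j by omega, Nat.choose_self]
  have : (Nat.factorial j : ℝ) ≠ 0 := Nat.cast_ne_zero.2 (Nat.factorial_ne_zero j)
  field_simp
  norm_num

lemma gfun_N1 (i : ℕ) : gfun (i + 2) 1 = ((i + 1 : ℝ) - 1 / 2) * gfun (i + 1) 1 := by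
  have hnat : (i + 1) * ((2 * i + 2).choose (i + 1)) = 2 * (2 * i + 1) * ((2 * i).choose i) := by
    have h := Nat.succ_mul_centralBinom_succ i
    unfold Nat.centralBinom at h
    rw [show 2 * (i + 1) = 2 * i + 2 by ring] at h
    exact h
  have hR : ((i : ℝ) + 1) * ((2 * i + 2).choose (i + 1) : ℝ)
      = 2 * (2 * (i : ℝ) + 1) * ((2 * i).choose i : ℝ) := by
    exact_mod_cast congrArg (Nat.cast : ℕ → ℝ) hnat
  unfold gfun
  rw [two_zpow, two_zpow, show 2 * (i + 2) - 1 - 1 = 2 * i + 2 by omega,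
    show i + 2 - 1 = i + 1 by omega, show 2 * (i + 1) - 1 - 1 = 2 * i by omega,
    show i + 1 - 1 = i by omega, show (1 : ℕ) - 1 = 0 by omega,
    show 2 * (i + 2) = (2 * (i + 1)) + 2 by ring, pow_add,
    Nat.factorial_succ, Nat.factorial_zero]
  have hp : (2 : ℝ) ^ (2 * (i + 1)) ≠ 0 := by positivity
  have hw : (Nat.factorial i : ℝ) ≠ 0 := Nat.cast_ne_zero.2 (Nat.factorial_ne_zero i)
  field_simp
  push_cast
  linear_combination (Nat.factorial i : ℝ) * hR

lemma gfun_N2 (j i : ℕ) :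
    gfun (j + i + 3) (j + 2) = gfun (j + i + 2) (j + 1)
      + ((j + i + 2 : ℝ) - (j + 2) / 2) * gfun (j + i + 2) (j + 2) := by
  have h1 : (j + 2*i + 3) * Nat.choose (j + 2*i + 2) (j + i + 1)
      = Nat.choose (j + 2*i + 3) (j + i + 2) * (j + i + 2) := by
    have := Nat.add_one_mul_choose_eq (j + 2*i + 2) (j + i + 1)
    simpa using this
  have h2 : Nat.choose (j + 2*i + 1) (j + i + 1) * (j + 2*i + 2)
      = Nat.choose (j + 2*i + 2) (j + i + 1) * (i + 1) := by
    have := Nat.choose_mul_succ_eq (j + 2*i + 1) (j + i + 1)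
    rw [show j + 2*i + 1 + 1 = j + 2*i + 2 by ring] at this
    rw [this, show j + 2*i + 2 - (j + i + 1) = i + 1 by omega]
  have h1R : ((j : ℝ) + 2*i + 3) * (Nat.choose (j + 2*i + 2) (j + i + 1) : ℝ)
      = (Nat.choose (j + 2*i + 3) (j + i + 2) : ℝ) * ((j:ℝ) + i + 2) := by
    exact_mod_cast congrArg (Nat.cast : ℕ → ℝ) h1
  have h2R : (Nat.choose (j + 2*i + 1) (j + i + 1) : ℝ) * ((j:ℝ) + 2*i + 2)
      = (Nat.choose (j + 2*i + 2) (j + i + 1) : ℝ) * ((i:ℝ) + 1) := by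
    exact_mod_cast congrArg (Nat.cast : ℕ → ℝ) h2
  unfold gfun
  rw [two_zpow, two_zpow, two_zpow,
    show 2 * (j + i + 3) - (j + 2) - 1 = j + 2*i + 3 by omega,
    show j + i + 3 - 1 = j + i + 2 by omega,
    show 2 * (j + i + 2) - (j + 1) - 1 = j + 2*i + 2 by omega,
    show j + i + 2 - 1 = j + i + 1 by omega,
    show 2 * (j + i + 2) - (j + 2) - 1 = j + 2*i + 1 by omega,
    show j + 2 - 1 = j + 1 by omega,
    show j + 1 - 1 = j by omega,
    show 2 * (j + i + 3) = 2 * (j + i + 2) + 2 by ring,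
    show 2 * (j + 2) = 2 * (j + 1) + 2 by ring,
    pow_add, pow_add]
  have e1 : (Nat.factorial (j + i + 2) : ℝ) = ((j:ℝ) + i + 2) * Nat.factorial (j + i + 1) := by
    rw [show j + i + 2 = (j + i + 1) + 1 from rfl, Nat.factorial_succ]
    push_cast; ring
  have e2 : (Nat.factorial (j + 1) : ℝ) = ((j:ℝ) + 1) * Nat.factorial j := by
    rw [Nat.factorial_succ]; push_cast; ring
  rw [e1, e2]
  have hp1 : (2 : ℝ) ^ (2 * (j + 1)) ≠ 0 := by positivity
  have hp2 : (2 : ℝ) ^ (2 * (j + i + 2)) ≠ 0 := by positivity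
  have hw1 : (Nat.factorial j : ℝ) ≠ 0 := Nat.cast_ne_zero.2 (Nat.factorial_ne_zero j)
  have hw2 : (Nat.factorial (j + i + 1) : ℝ) ≠ 0 := Nat.cast_ne_zero.2 (Nat.factorial_ne_zero _)
  field_simp
  linear_combination (-1 : ℝ) * h1R + (-2 : ℝ) * h2R

lemma S_eq (s : Finset α) : ∀ k, 1 ≤ k → k ≤ s.card → S s k = gfun s.card k := by
  induction s using Finset.induction_on with
  | empty => intro k hk hkc; simp at hkc; omega
  | @insert a s ha IH =>
    intro k hk hkc
    rw [Finset.card_insert_of_notMem ha] at hkc ⊢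
    obtain ⟨k', rfl⟩ : ∃ k', k = k' + 1 := ⟨k - 1, by omega⟩
    rw [S_rec ha]
    match k' with
    | 0 =>
      rcases s.eq_empty_or_nonempty with rfl | hs
      · rw [S_empty_zero, S_card_lt (by simp)]
        simp only [Finset.card_empty]
        rw [gfun_self 1 le_rfl]
        norm_num
      · have hc : 1 ≤ s.card := hs.card_pos
        rw [S_zero_of_nonempty hs, IH 1 le_rfl hc]
        obtain ⟨i, hi⟩ : ∃ i, s.card = i + 1 := ⟨s.card - 1, by omega⟩
        rw [hi]
        have := gfun_N1 i
        rw [show i + 1 + 1 = i + 2 by ring, this]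
        push_cast
        ring
    | k'' + 1 =>
      have hk1 : k'' + 1 ≤ s.card := by omega
      rw [IH (k'' + 1) (by omega) hk1]
      rcases Nat.lt_or_ge (k'' + 2) (s.card + 1) with hlt | hge
      · have hle : k'' + 2 ≤ s.card := by omega
        rw [IH (k'' + 2) (by omega) hle]
        obtain ⟨i, hi⟩ : ∃ i, s.card = k'' + i + 2 := ⟨s.card - k'' - 2, by omega⟩
        rw [hi]
        have := gfun_N2 k'' i
        rw [show k'' + i + 2 + 1 = k'' + i + 3 by ring, show k'' + 1 + 1 = k'' + 2 by ring, this]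
        push_cast
        ring
      · have heq : k'' + 2 = s.card + 1 := by omega
        rw [S_card_lt (by omega)]
        have h1 : k'' + 1 = s.card := by omega
        rw [heq, h1, gfun_self (s.card + 1) (by omega), gfun_self s.card (by omega)]
        ring

theorem sum_partitions_halfRising (n k : ℕ) (hk : 1 ≤ k) (hkn : k ≤ n) :
    ∑ P ∈ Finset.univ.filter
        (fun P : Finpartition (Finset.univ : Finset (Fin n)) => P.parts.card = k),
      ∏ A ∈ P.parts, halfRising (A.card - 1)
    = (Nat.choose (2 * n - k - 1) (n - 1) : ℝ) * (Nat.factorial (n - 1)) /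
        (Nat.factorial (k - 1)) * (2 : ℝ) ^ (2 * (k : ℤ) - 2 * n) := by
  rw [sum_finpartition (Finset.univ : Finset (Fin n)) (fun A => halfRising (A.card - 1)) k]
  have h := S_eq (Finset.univ : Finset (Fin n)) k hk (by simpa using hkn)
  unfold S gfun at h
  rw [h]
  simp
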